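/- In every execution of the online collaborative caching algorithm on a request sequence v_1, …, v_n (n ≥ 1), and for every nonempty finite set W* ⊆ X containing the root r, the total UA cost paid by the algorithm satisfies Σ_{j=1}^n d(W_{v_j}, v_j) ≤ log₂(n+1) · Σ_{w∈W*} f_w + (2·log₂(n+1) + 1) · Σ_{j=1}^n d(W*, v_j), where W_{v_j} denotes the cache set at the time request v_j is assigned. -/

import Mathlib

open Finset

/-- The setting of the online collaborative caching problem: a finite set `X` of nodes
(base stations together with the root `r` representing the Internet), a pseudometric
UA-cost `d` satisfying the triangle inequality, and nonnegative caching costs `f`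
with `f r = 0` (the root always holds the content). -/
structure CachingSetting (X : Type*) [Fintype X] where
  d : X → X → ℝ
  f : X → ℝ
  r : X
  d_nonneg : ∀ x y, 0 ≤ d x y
  d_self : ∀ x, d x x = 0
  d_symm : ∀ x y, d x y = d y x
  d_triangle : ∀ x y z, d x z ≤ d x y + d y z
  f_nonneg : ∀ k, 0 ≤ f k
  f_root : f r = 0

namespace CachingSetting

variable {X : Type*} [Fintype X] [DecidableEq X] (S : CachingSetting X)

/-- UA cost of serving a request at `v` from the nearest node of the cache set `W`:
`D W v = min_{k ∈ W} d k v`. -/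
noncomputable def D (W : Finset X) (v : X) : ℝ :=
  if h : W.Nonempty then W.inf' h (fun k => S.d k v) else 0

/-- Potential of node `k` with respect to the cache set `W` and the first `j`
requests of the request sequence `v`:
`pot v W j k = ∑_{i < j} max(D W (v i) − d k (v i), 0)`. -/
noncomputable def pot (v : ℕ → X) (W : Finset X) (j : ℕ) (k : X) : ℝ :=
  ∑ i ∈ Finset.range j, max (S.D W (v i) - S.d k (v i)) 0

/-- One step of the online algorithm on request `v i`, turning the cache set `W`
into `W'`.  After updating the potentials (they become the potentials with respect
to `W` and the first `i + 1` requests), either all potentials are at most the caching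
costs and no new cache is opened, or the content is cached at a maximizer `w` of
`p(k) − f k` with `p(w) − f w > 0`. -/
def Step (v : ℕ → X) (i : ℕ) (W W' : Finset X) : Prop :=
  ((∀ k, S.pot v W (i + 1) k ≤ S.f k) ∧ W' = W) ∨
    (∃ w, (∀ k, S.pot v W (i + 1) k - S.f k ≤ S.pot v W (i + 1) w - S.f w) ∧
      S.f w < S.pot v W (i + 1) w ∧ W' = insert w W)

/-- `IsExecution S n v Ws` says that `Ws j` is the cache set maintained by the online
algorithm after fully processing the first `j` of the `n` requests `v 0, v 1, …`
(initially the cache set is `{r}`); ties may be broken arbitrarily. -/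
def IsExecution (n : ℕ) (v : ℕ → X) (Ws : ℕ → Finset X) : Prop :=
  Ws 0 = {S.r} ∧ ∀ i < n, S.Step v i (Ws i) (Ws (i + 1))

end CachingSetting

set_option linter.unusedSectionVars false
set_option linter.unusedVariables false


lemma exp_mul_log_two_le (t : ℝ) (h0 : 0 ≤ t) (h1 : t ≤ 1) :
    Real.exp (t * Real.log 2) ≤ 1 + t := by
  have h := convexOn_exp.2 (Set.mem_univ (0:ℝ)) (Set.mem_univ (Real.log 2))
    (by linarith : (0:ℝ) ≤ 1 - t) h0 (by ring)
  simp only [smul_eq_mul, mul_zero, zero_add, Real.exp_zero,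
    Real.exp_log (by norm_num : (0:ℝ) < 2)] at h
  linarith

lemma harmonic_le_logb (m : ℕ) :
    ∑ t ∈ Finset.range m, (1:ℝ)/(t+1) ≤ Real.logb 2 ((m:ℝ)+1) := by
  induction m with
  | zero => simp
  | succ m ih =>
    rw [Finset.sum_range_succ]
    have hm1 : (0:ℝ) < (m:ℝ) + 1 := by positivity
    have hlog2 : (0:ℝ) < Real.log 2 := Real.log_pos (by norm_num)
    set t : ℝ := 1/((m:ℝ)+1) with ht
    have ht0 : 0 ≤ t := by positivity
    have ht1 : t ≤ 1 := by rw [ht]; rw [div_le_one hm1]; linarith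
    have hexp := exp_mul_log_two_le t ht0 ht1
    have h1 : t * Real.log 2 ≤ Real.log (1+t) :=
      (Real.le_log_iff_exp_le (by positivity)).2 hexp
    have h2 : (1:ℝ) + t = ((m:ℝ)+2)/((m:ℝ)+1) := by
      rw [ht]; field_simp; ring
    have h3 : Real.log (1+t) = Real.log ((m:ℝ)+2) - Real.log ((m:ℝ)+1) := by
      rw [h2, Real.log_div (by positivity) (by positivity)]
    have h4 : t ≤ Real.logb 2 ((m:ℝ)+2) - Real.logb 2 ((m:ℝ)+1) := by
      rw [Real.logb, Real.logb, ← sub_div, ← h3, le_div_iff₀ hlog2]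
      linarith
    push_cast
    have h5 : ((m:ℝ)+1+1) = (m:ℝ)+2 := by ring
    rw [h5]
    linarith [ih]


lemma sum_le_harmonic (A : ℕ → ℝ) (K : ℝ) (hK : 0 ≤ K) (C : Finset ℕ)
    (hA : ∀ j ∈ C, 0 ≤ A j)
    (h : ∀ j ∈ C, ((C.filter (fun i => i ≤ j)).card : ℝ) * A j ≤ K) :
    ∑ j ∈ C, A j ≤ K * ∑ t ∈ Finset.range C.card, (1:ℝ)/(t+1) := by
  induction C using Finset.strongInduction with
  | _ C ih =>
    rcases C.eq_empty_or_nonempty with rfl | hC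
    · simp
    · set j0 := C.max' hC with hj0def
      have hj0 : j0 ∈ C := C.max'_mem hC
      have hfull : C.filter (fun i => i ≤ j0) = C :=
        Finset.filter_true_of_mem (fun i hi => C.le_max' i hi)
      have hcard : 0 < C.card := Finset.card_pos.2 hC
      have hAj0 : (C.card : ℝ) * A j0 ≤ K := by
        have := h j0 hj0; rwa [hfull] at this
      set C' := C.erase j0 with hC'def
      have hsub : C' ⊂ C := Finset.erase_ssubset hj0
      have hfe : ∀ j ∈ C', (C'.filter (fun i => i ≤ j)).card
          = (C.filter (fun i => i ≤ j)).card := by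
        intro j hj
        have hjne : j ≠ j0 := Finset.ne_of_mem_erase hj
        have hjle : j ≤ j0 := C.le_max' j (Finset.mem_of_mem_erase hj)
        have : j0 ∉ C.filter (fun i => i ≤ j) := by
          intro hmem
          exact hjne (le_antisymm hjle (Finset.mem_filter.1 hmem).2)
        rw [hC'def, Finset.filter_erase, Finset.erase_eq_of_notMem this]
      have hih : ∑ j ∈ C', A j ≤ K * ∑ t ∈ Finset.range C'.card, (1:ℝ)/(t+1) :=
        ih C' hsub (fun j hj => hA j (Finset.mem_of_mem_erase hj))
          (fun j hj => by rw [hfe j hj]; exact h j (Finset.mem_of_mem_erase hj))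
      obtain ⟨m, hm⟩ : ∃ m, C.card = m + 1 :=
        ⟨C.card - 1, (Nat.succ_pred_eq_of_pos hcard).symm⟩
      have hC'card : C'.card = m := by
        rw [hC'def, Finset.card_erase_of_mem hj0, hm]; omega
      have hsum : ∑ j ∈ C, A j = ∑ j ∈ C', A j + A j0 := by
        rw [hC'def, Finset.sum_erase_add C A hj0]
      have hAj0' : A j0 ≤ K * (1/((m:ℝ)+1)) := by
        rw [hm] at hAj0
        have hpos : (0:ℝ) < (m:ℝ)+1 := by positivity
        rw [mul_one_div, le_div_iff₀ hpos, mul_comm]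
        push_cast at hAj0 ⊢
        linarith
      rw [hsum, hm, Finset.sum_range_succ]
      rw [hC'card] at hih
      push_cast
      nlinarith [hih, hAj0']


namespace CachingSetting
variable {X : Type*} [Fintype X] [DecidableEq X] (S : CachingSetting X)

lemma D_eq (W : Finset X) (h : W.Nonempty) (v : X) :
    S.D W v = W.inf' h (fun k => S.d k v) := dif_pos h

lemma D_nonneg (W : Finset X) (v : X) : 0 ≤ S.D W v := by
  unfold D
  split
  · next h => exact Finset.le_inf' h _ (fun k _ => S.d_nonneg k v)
  · exact le_refl 0

lemma D_le_of_mem {W : Finset X} {k : X} (hk : k ∈ W) (v : X) : S.D W v ≤ S.d k v := by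
  rw [S.D_eq W ⟨k, hk⟩]
  exact Finset.inf'_le _ hk

lemma D_tri (W : Finset X) (hW : W.Nonempty) (u v : X) :
    S.D W v ≤ S.D W u + S.d u v := by
  obtain ⟨k, hk, hke⟩ := Finset.exists_mem_eq_inf' hW (fun k => S.d k u)
  calc S.D W v ≤ S.d k v := S.D_le_of_mem hk v
  _ ≤ S.d k u + S.d u v := S.d_triangle k u v
  _ = S.D W u + S.d u v := by rw [S.D_eq W hW, hke]

lemma D_insert (W : Finset X) (hW : W.Nonempty) (w u : X) :
    S.D (insert w W) u = min (S.d w u) (S.D W u) := by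
  rw [S.D_eq _ (Finset.insert_nonempty _ _), S.D_eq _ hW, Finset.inf'_insert]

lemma pot_succ (v : ℕ → X) (W : Finset X) (j : ℕ) (k : X) :
    S.pot v W (j+1) k = S.pot v W j k + max (S.D W (v j) - S.d k (v j)) 0 :=
  Finset.sum_range_succ _ _

lemma invariant {n : ℕ} {v : ℕ → X} {Ws : ℕ → Finset X}
    (h0 : Ws 0 = {S.r}) (hstep : ∀ i < n, S.Step v i (Ws i) (Ws (i+1))) :
    ∀ j ≤ n, (Ws j).Nonempty ∧ ∀ k, S.pot v (Ws j) j k ≤ S.f k := by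
  intro j
  induction j with
  | zero =>
    intro _
    refine ⟨by rw [h0]; exact Finset.singleton_nonempty _, fun k => ?_⟩
    simpa [pot] using S.f_nonneg k
  | succ j ih =>
    intro hj
    obtain ⟨hne, hP⟩ := ih (Nat.le_of_succ_le hj)
    rcases hstep j (Nat.lt_of_succ_le hj) with ⟨hq, hW⟩ | ⟨w, hmax, hpos, hW⟩
    · exact ⟨hW ▸ hne, hW ▸ hq⟩
    · rw [hW]
      refine ⟨Finset.insert_nonempty _ _, fun k => ?_⟩
      have hmono : ∀ u, S.D (insert w (Ws j)) u ≤ S.D (Ws j) u := fun u => by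
        rw [S.D_insert _ hne]; exact min_le_right _ _
      have hA : S.pot v (insert w (Ws j)) j k ≤ S.pot v (Ws j) j k :=
        Finset.sum_le_sum (fun i _ =>
          max_le_max (sub_le_sub_right (hmono (v i)) _) le_rfl)
      have hPk := hP k
      have hPw := hP w
      have hq := hmax k
      rw [S.pot_succ, S.pot_succ] at hq
      rw [S.pot_succ, S.D_insert _ hne]
      set Dv := S.D (Ws j) (v j)
      set dk := S.d k (v j)
      set dw := S.d w (v j)
      rcases le_or_gt (min dw Dv) dk with h | h
      · rw [max_eq_right (sub_nonpos.2 h)]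
        linarith
      · have hdkw : dk < dw := lt_of_lt_of_le h (min_le_left _ _)
        have hdkD : dk < Dv := lt_of_lt_of_le h (min_le_right _ _)
        rw [max_eq_left (by linarith [min_le_left dw Dv, min_le_right dw Dv] : (0:ℝ) ≤ min dw Dv - dk)]
        rw [max_eq_left (by linarith : (0:ℝ) ≤ Dv - dk)] at hq
        rcases le_or_gt dw Dv with h2 | h2
        · rw [min_eq_left h2]
          rw [max_eq_left (by linarith : (0:ℝ) ≤ Dv - dw)] at hq
          linarith
        · rw [min_eq_right (le_of_lt h2)]
          rw [max_eq_right (by linarith : Dv - dw ≤ 0)] at hq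
          linarith

end CachingSetting

/-- Lemma 2 of the paper: in every execution of the online collaborative caching
algorithm on requests `v 0, …, v (n-1)` (`n ≥ 1`) and for every offline cache set
`W*` containing the root, the total UA cost paid by the algorithm satisfies
`∑_j d(W_{v_j}, v_j) ≤ log₂(n+1) · ∑_{w ∈ W*} f w + (2 log₂(n+1) + 1) · ∑_j d(W*, v_j)`,
where `W_{v_j} = Ws (j+1)` is the cache set at the time request `v j` is assigned. -/
theorem caching_UA_cost_bound {X : Type*} [Fintype X] [DecidableEq X]
    (S : CachingSetting X) (n : ℕ) (hn : 1 ≤ n) (v : ℕ → X) (Ws : ℕ → Finset X)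
    (hexec : S.IsExecution n v Ws)
    (Wstar : Finset X) (hr : S.r ∈ Wstar) :
    ∑ j ∈ Finset.range n, S.D (Ws (j + 1)) (v j) ≤
      Real.logb 2 ((n : ℝ) + 1) * ∑ w ∈ Wstar, S.f w +
        (2 * Real.logb 2 ((n : ℝ) + 1) + 1) * ∑ j ∈ Finset.range n, S.D Wstar (v j) := by
  obtain ⟨h0, hstep⟩ := hexec
  have hWstar : Wstar.Nonempty := ⟨S.r, hr⟩
  have hinv := S.invariant h0 hstep
  set L := Real.logb 2 ((n : ℝ) + 1) with hL
  -- choose the cluster center of each request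
  have hcl : ∀ j, ∃ x, x ∈ Wstar ∧ S.d x (v j) = S.D Wstar (v j) := by
    intro j
    obtain ⟨x, hx, hxe⟩ := Finset.exists_mem_eq_inf' hWstar (fun k => S.d k (v j))
    exact ⟨x, hx, by rw [S.D_eq Wstar hWstar, hxe]⟩
  choose cl hclmem hcld using hcl
  -- step 1: triangle inequality through the cluster center
  have h1 : ∑ j ∈ Finset.range n, S.D (Ws (j + 1)) (v j) ≤
      (∑ j ∈ Finset.range n, S.D (Ws (j + 1)) (cl j)) +
        ∑ j ∈ Finset.range n, S.D Wstar (v j) := by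
    rw [← Finset.sum_add_distrib]
    refine Finset.sum_le_sum (fun j hj => ?_)
    have hjn : j + 1 ≤ n := Nat.succ_le_of_lt (Finset.mem_range.1 hj)
    have hne := (hinv (j+1) hjn).1
    calc S.D (Ws (j+1)) (v j) ≤ S.D (Ws (j+1)) (cl j) + S.d (cl j) (v j) :=
          S.D_tri _ hne _ _
      _ = S.D (Ws (j+1)) (cl j) + S.D Wstar (v j) := by rw [hcld j]
  -- step 2: per-cluster bound
  have h2 : ∀ x ∈ Wstar,
      ∑ j ∈ (Finset.range n).filter (fun j => cl j = x), S.D (Ws (j + 1)) x ≤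
      (S.f x + 2 * ∑ j ∈ (Finset.range n).filter (fun j => cl j = x), S.D Wstar (v j)) * L := by
    intro x hx
    set C := (Finset.range n).filter (fun j => cl j = x) with hC
    set Sx := ∑ j ∈ C, S.D Wstar (v j) with hSx
    have hSx0 : 0 ≤ Sx := Finset.sum_nonneg (fun j _ => S.D_nonneg _ _)
    have hK0 : 0 ≤ S.f x + 2 * Sx := by linarith [S.f_nonneg x]
    have hkey : ∀ j ∈ C, ((C.filter (fun i => i ≤ j)).card : ℝ) * S.D (Ws (j+1)) x
        ≤ S.f x + 2 * Sx := by
      intro j hj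
      have hjn : j < n := Finset.mem_range.1 (Finset.mem_filter.1 hj).1
      have hfx := (hinv (j+1) hjn).2 x
      set T := C.filter (fun i => i ≤ j) with hT
      have hTsub : T ⊆ Finset.range (j+1) := by
        intro i hi
        obtain ⟨hiC, hile⟩ := Finset.mem_filter.1 hi
        exact Finset.mem_range.2 (Nat.lt_succ_of_le hile)
      have hlow : ∑ i ∈ T, (S.D (Ws (j+1)) x - 2 * S.D Wstar (v i)) ≤
          S.pot v (Ws (j+1)) (j+1) x := by
        unfold CachingSetting.pot
        refine le_trans (Finset.sum_le_sum (fun i hi => ?_))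
          (Finset.sum_le_sum_of_subset_of_nonneg hTsub (fun i _ _ => le_max_right _ _))
        have hclx : cl i = x := (Finset.mem_filter.1 ((Finset.mem_filter.1 hi).1)).2
        have hdx : S.d x (v i) = S.D Wstar (v i) := by rw [← hclx]; exact hcld i
        have hne := (hinv (j+1) hjn).1
        have htri : S.D (Ws (j+1)) x ≤ S.D (Ws (j+1)) (v i) + S.d x (v i) := by
          have := S.D_tri (Ws (j+1)) hne (v i) x
          rwa [S.d_symm (v i) x] at this
        have : S.D (Ws (j+1)) x - 2 * S.D Wstar (v i) ≤
            S.D (Ws (j+1)) (v i) - S.d x (v i) := by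
          rw [← hdx]; linarith
        exact le_trans this (le_max_left _ _)
      rw [Finset.sum_sub_distrib, Finset.sum_const, nsmul_eq_mul] at hlow
      have hTS : ∑ i ∈ T, S.D Wstar (v i) ≤ Sx := by
        refine Finset.sum_le_sum_of_subset_of_nonneg (Finset.filter_subset _ _)
          (fun i _ _ => S.D_nonneg _ _)
      rw [← Finset.mul_sum] at hlow
      linarith
    have hharm := sum_le_harmonic (fun j => S.D (Ws (j+1)) x) (S.f x + 2 * Sx) hK0 C
      (fun j _ => S.D_nonneg _ _) hkey
    have hcard : (C.card : ℝ) + 1 ≤ (n : ℝ) + 1 := by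
      have : C.card ≤ n := le_trans (Finset.card_filter_le _ _) (by simp)
      exact_mod_cast Nat.succ_le_succ this
    have hHlog : ∑ t ∈ Finset.range C.card, (1:ℝ)/(t+1) ≤ L := by
      refine le_trans (harmonic_le_logb C.card) ?_
      exact Real.logb_le_logb_of_le (by norm_num : (1:ℝ)<2) (by positivity) (by linarith)
    calc ∑ j ∈ C, S.D (Ws (j+1)) x
        ≤ (S.f x + 2 * Sx) * ∑ t ∈ Finset.range C.card, (1:ℝ)/(t+1) := hharm
      _ ≤ (S.f x + 2 * Sx) * L := by
          exact mul_le_mul_of_nonneg_left hHlog hK0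
  -- assemble
  have hfib : ∀ (g : ℕ → ℝ),
      ∑ x ∈ Wstar, ∑ j ∈ (Finset.range n).filter (fun j => cl j = x), g j
        = ∑ j ∈ Finset.range n, g j := fun g =>
    Finset.sum_fiberwise_of_maps_to (fun j _ => hclmem j) g
  have h3 : ∑ j ∈ Finset.range n, S.D (Ws (j+1)) (cl j) ≤
      L * (∑ w ∈ Wstar, S.f w) + 2 * L * ∑ j ∈ Finset.range n, S.D Wstar (v j) := by
    rw [← hfib (fun j => S.D (Ws (j+1)) (cl j)), ← hfib (fun j => S.D Wstar (v j))]
    rw [Finset.mul_sum, Finset.mul_sum, ← Finset.sum_add_distrib]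
    refine Finset.sum_le_sum (fun x hx => ?_)
    have : ∑ j ∈ (Finset.range n).filter (fun j => cl j = x), S.D (Ws (j+1)) (cl j)
        = ∑ j ∈ (Finset.range n).filter (fun j => cl j = x), S.D (Ws (j+1)) x := by
      refine Finset.sum_congr rfl (fun j hj => ?_)
      rw [(Finset.mem_filter.1 hj).2]
    rw [this]
    have := h2 x hx
    ring_nf
    ring_nf at this
    linarith
  have hs0 : 0 ≤ ∑ j ∈ Finset.range n, S.D Wstar (v j) :=
    Finset.sum_nonneg (fun j _ => S.D_nonneg _ _)
  linarith
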